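/- Let B be a good word in the Ehrenfeucht–Mycielski sequence with at least five occurrences, ending at positions a < b < c < d < e. Let u = x_{a+1} x_{b+1} x_{c+1} x_{d+1} x_{e+1} and v = x_{a+2} x_{b+2} x_{c+2} x_{d+2} x_{e+2}. Then |N_u(0) − N_u(1)| ≤ 1 or |N_v(0) − N_v(1)| ≤ 1, where N_w(b) counts occurrences of bit b in the 5-bit word w. -/

import Mathlib

/-- The word `w` occurs in the binary sequence `x` starting at position `i`. -/
def OccursAt (x : ℕ → Bool) (w : List Bool) (i : ℕ) : Prop :=
  ∀ k : Fin w.length, x (i + k) = w.get k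

/-- At generation step `n` (the first `n` bits `x 0, …, x (n-1)` are known),
the suffix of length `l` of the current prefix matches an earlier occurrence
starting at `j` (so the bit following that earlier occurrence is known). -/
def MatchAt (x : ℕ → Bool) (n l j : ℕ) : Prop :=
  0 < l ∧ l ≤ n ∧ j + l < n ∧ ∀ k < l, x (j + k) = x (n - l + k)

/-- `x` is generated by the Ehrenfeucht–Mycielski rule: it starts `0,1,0` and,
at each step, the longest suffix of the current prefix that occurred before is
found, its last previous occurrence is located, and the appended bit is the
complement of the bit following that previous occurrence. -/
def IsEM (x : ℕ → Bool) : Prop :=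
  x 0 = false ∧ x 1 = true ∧ x 2 = false ∧
  ∀ n, 3 ≤ n → ∃ l j, MatchAt x n l j ∧
    (∀ l' j', MatchAt x n l' j' → l' ≤ l) ∧
    (∀ j', MatchAt x n l j' → j' ≤ j) ∧
    x n = !x (j + l)

/-- `p₁ < p₂ < p₃ < p₄ < p₅` are the positions of the first five occurrences
of `B` in `x`. -/
def FirstFiveOccs (x : ℕ → Bool) (B : List Bool) (p₁ p₂ p₃ p₄ p₅ : ℕ) : Prop :=
  p₁ < p₂ ∧ p₂ < p₃ ∧ p₃ < p₄ ∧ p₄ < p₅ ∧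
  OccursAt x B p₁ ∧ OccursAt x B p₂ ∧ OccursAt x B p₃ ∧ OccursAt x B p₄ ∧
  OccursAt x B p₅ ∧
  ∀ q, q < p₅ → OccursAt x B q → q = p₁ ∨ q = p₂ ∨ q = p₃ ∨ q = p₄

/-- `p₁ < p₂ < p₃ < p₄` are the positions of the first four occurrences
of `B` in `x`. -/
def FirstFourOccs (x : ℕ → Bool) (B : List Bool) (p₁ p₂ p₃ p₄ : ℕ) : Prop :=
  p₁ < p₂ ∧ p₂ < p₃ ∧ p₃ < p₄ ∧
  OccursAt x B p₁ ∧ OccursAt x B p₂ ∧ OccursAt x B p₃ ∧ OccursAt x B p₄ ∧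
  ∀ q, q < p₄ → OccursAt x B q → q = p₁ ∨ q = p₂ ∨ q = p₃

/-- `B` is a good word: the bits immediately preceding its first two
occurrences are complementary (an occurrence at position `0` counts). -/
def GoodWord (x : ℕ → Bool) (B : List Bool) : Prop :=
  ∃ i j, i < j ∧ OccursAt x B i ∧ OccursAt x B j ∧
    (∀ k, k < j → OccursAt x B k → k = i) ∧
    (i = 0 ∨ x (i - 1) = !x (j - 1))

namespace EMaux

/-- common suffix of length `m` of the prefixes ending at `t` and `s` (`t ≤ s`). -/
def Sim (x : ℕ → Bool) (s t : ℕ) (m : ℕ) : Prop :=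
  m ≤ t + 1 ∧ ∀ k < m, x (t - k) = x (s - k)

open Classical in
noncomputable def mu (x : ℕ → Bool) (s t : ℕ) : ℕ :=
  Nat.findGreatest (Sim x s t) (t + 1)

lemma sim_zero (x : ℕ → Bool) (s t : ℕ) : Sim x s t 0 :=
  ⟨Nat.zero_le _, fun k hk => absurd hk (Nat.not_lt_zero k)⟩

lemma sim_mono {x : ℕ → Bool} {s t m k : ℕ} (h : Sim x s t m) (hk : k ≤ m) :
    Sim x s t k :=
  ⟨le_trans hk h.1, fun i hi => h.2 i (lt_of_lt_of_le hi hk)⟩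

open Classical in
lemma sim_mu (x : ℕ → Bool) (s t : ℕ) : Sim x s t (mu x s t) := by
  exact Nat.findGreatest_spec (Nat.zero_le _) (sim_zero x s t)

open Classical in
lemma le_mu {x : ℕ → Bool} {s t m : ℕ} (h : Sim x s t m) : m ≤ mu x s t :=
  Nat.le_findGreatest h.1 h

open Classical in
lemma mu_le (x : ℕ → Bool) (s t : ℕ) : mu x s t ≤ t + 1 :=
  Nat.findGreatest_le _

lemma not_sim_mu_succ (x : ℕ → Bool) (s t : ℕ) : ¬ Sim x s t (mu x s t + 1) :=
  fun h => by have := le_mu h; omega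

/-- U1 -/
lemma mu_eq_of_lt_left {x : ℕ → Bool} {s t₁ t₂ : ℕ} (h12 : t₁ ≤ t₂)
    (h : mu x t₂ t₁ < mu x s t₂) : mu x s t₁ = mu x t₂ t₁ := by
  set m := mu x t₂ t₁ with hm
  have hs2 : Sim x s t₂ (m + 1) := sim_mono (sim_mu x s t₂) (by omega)
  have h21 : Sim x t₂ t₁ m := sim_mu x t₂ t₁
  have hge : m ≤ mu x s t₁ :=
    le_mu ⟨h21.1, fun k hk => (h21.2 k hk).trans (hs2.2 k (by omega))⟩
  have hle : mu x s t₁ ≤ m := by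
    by_contra hc
    have hst1 : Sim x s t₁ (m + 1) := sim_mono (sim_mu x s t₁) (by omega)
    have : Sim x t₂ t₁ (m + 1) :=
      ⟨hst1.1, fun k hk => (hst1.2 k hk).trans (hs2.2 k hk).symm⟩
    have := le_mu this
    omega
  omega

/-- U2 -/
lemma mu_eq_of_lt_right {x : ℕ → Bool} {s t₁ t₂ : ℕ} (h12 : t₁ ≤ t₂)
    (h : mu x s t₂ < mu x s t₁) : mu x t₂ t₁ = mu x s t₂ := by
  set m := mu x s t₂ with hm
  have hst1 : Sim x s t₁ (m + 1) := sim_mono (sim_mu x s t₁) (by omega)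
  have hst2 : Sim x s t₂ m := sim_mu x s t₂
  have hge : m ≤ mu x t₂ t₁ :=
    le_mu ⟨by have := hst1.1; omega,
      fun k hk => (hst1.2 k (by omega)).trans (hst2.2 k hk).symm⟩
  have hle : mu x t₂ t₁ ≤ m := by
    by_contra hc
    have h21 : Sim x t₂ t₁ (m + 1) := sim_mono (sim_mu x t₂ t₁) (by omega)
    have : Sim x s t₂ (m + 1) :=
      ⟨by have := hst1.1; omega, fun k hk => (h21.2 k hk).symm.trans (hst1.2 k hk)⟩
    have := le_mu this
    omega
  omega

/-- shift lemma -/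
lemma mu_succ {x : ℕ → Bool} {s t : ℕ} (hb : x (t + 1) = x (s + 1)) :
    mu x (s + 1) (t + 1) = mu x s t + 1 := by
  set m := mu x s t with hm
  have hst : Sim x s t m := sim_mu x s t
  have hge : m + 1 ≤ mu x (s+1) (t+1) := by
    apply le_mu
    refine ⟨by have := hst.1; omega, fun k hk => ?_⟩
    cases k with
    | zero => simpa using hb
    | succ k' =>
      have e1 : t + 1 - (k' + 1) = t - k' := by omega
      have e2 : s + 1 - (k' + 1) = s - k' := by omega
      rw [e1, e2]; exact hst.2 k' (by omega)
  have hle : mu x (s+1) (t+1) ≤ m + 1 := by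
    by_contra hc
    have h2 : Sim x (s+1) (t+1) (m + 2) := sim_mono (sim_mu x (s+1) (t+1)) (by omega)
    have : Sim x s t (m + 1) := by
      refine ⟨by have := h2.1; omega, fun k hk => ?_⟩
      have := h2.2 (k+1) (by omega)
      have e1 : t + 1 - (k + 1) = t - k := by omega
      have e2 : s + 1 - (k + 1) = s - k := by omega
      rwa [e1, e2] at this
    have := le_mu this
    omega
  omega

lemma occursAt_append (x : ℕ → Bool) (B : List Bool) (c : Bool) (q : ℕ) :
    OccursAt x (B ++ [c]) q ↔ OccursAt x B q ∧ x (q + B.length) = c := by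
  constructor
  · intro h
    refine ⟨fun k => ?_, ?_⟩
    · have hk : (k : ℕ) < (B ++ [c]).length := by simp
      have := h ⟨k, hk⟩
      rw [List.get_eq_getElem] at this ⊢
      rwa [List.getElem_append_left k.2] at this
    · have hk : B.length < (B ++ [c]).length := by simp
      have := h ⟨B.length, hk⟩
      rw [List.get_eq_getElem] at this
      simpa using this
  · rintro ⟨h1, h2⟩ k
    have hk2 : (k : ℕ) < B.length + 1 := by
      have := k.2; simpa using this
    rw [List.get_eq_getElem]
    rcases Nat.lt_or_ge (k : ℕ) B.length with hlt | hge
    · rw [List.getElem_append_left hlt]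
      have := h1 ⟨k, hlt⟩
      rw [List.get_eq_getElem] at this
      exact this
    · have hkl : (k : ℕ) = B.length := by omega
      have hg : (B ++ [c])[(k : ℕ)]'(k.2) = c := by
        rw [List.getElem_concat_length (l := B) (a := c) hkl]
      rw [hg, hkl]
      exact h2

/-- The EM step rule packaged: if the current prefix ends with `w`, and `P`
characterizes exactly the earlier ending positions of occurrences of `w`,
then the new bit is the complement of the bit after one of these, and that
one maximizes `mu` (with ties going to later positions). -/
lemma rule (x : ℕ → Bool) (hx : IsEM x) (w : List Bool) (n : ℕ) (hn : 3 ≤ n)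
    (hw0 : 0 < w.length) (hwn : w.length < n)
    (hocc : OccursAt x w (n - w.length))
    (P : ℕ → Prop) (hne : ∃ m, P m)
    (hPocc : ∀ m, P m → m + 2 ≤ n ∧ w.length ≤ m + 1 ∧ OccursAt x w (m + 1 - w.length))
    (hPall : ∀ m, m + 2 ≤ n → w.length ≤ m + 1 → OccursAt x w (m + 1 - w.length) → P m) :
    ∃ m, P m ∧ x n = !x (m + 1) ∧
      ∀ m', P m' → mu x (n - 1) m' < mu x (n - 1) m ∨ m' ≤ m := by
  obtain ⟨l, j, hma, hlmax, hjmax, hxn⟩ := hx.2.2.2 n hn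
  obtain ⟨hl0, hln, hjl, hmatch⟩ := hma
  set L := w.length with hL
  have occ_match : ∀ m, P m → MatchAt x n L (m + 1 - L) := by
    intro m hm
    obtain ⟨h2, h1, hoc⟩ := hPocc m hm
    refine ⟨hw0, by omega, by omega, fun k hk => ?_⟩
    have e1 := hoc ⟨k, hk⟩
    have e2 := hocc ⟨k, hk⟩
    simp only [List.get_eq_getElem] at e1 e2
    rw [e1, e2]
  have hlL : L ≤ l := by
    obtain ⟨m, hm⟩ := hne
    exact hlmax L _ (occ_match m hm)
  set m₀ := j + l - 1 with hm₀
  have hm₀1 : m₀ + 1 = j + l := by omega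
  have hm₀P : P m₀ := by
    apply hPall m₀ (by omega) (by omega)
    intro k
    have hk := k.2
    have h1 := hmatch (l - L + (k : ℕ)) (by omega)
    have e2 := hocc ⟨k, hk⟩
    calc x (m₀ + 1 - L + (k : ℕ)) = x (j + (l - L + (k : ℕ))) := by congr 1; omega
      _ = x (n - l + (l - L + (k : ℕ))) := h1
      _ = x (n - L + (k : ℕ)) := by congr 1; omega
      _ = w.get ⟨k, hk⟩ := e2
  have hsim : Sim x (n - 1) m₀ l := by
    refine ⟨by omega, fun k hk => ?_⟩
    have h1 := hmatch (l - 1 - k) (by omega)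
    calc x (m₀ - k) = x (j + (l - 1 - k)) := by congr 1; omega
      _ = x (n - l + (l - 1 - k)) := h1
      _ = x (n - 1 - k) := by congr 1; omega
  have hl_le : l ≤ mu x (n - 1) m₀ := le_mu hsim
  have hmu_le : mu x (n - 1) m₀ ≤ l := by
    set M := mu x (n - 1) m₀ with hM
    have hs := sim_mu x (n - 1) m₀
    have hMle : M ≤ m₀ + 1 := mu_le x (n - 1) m₀
    apply hlmax M (m₀ + 1 - M)
    refine ⟨by omega, by omega, by omega, fun k hk => ?_⟩
    have h1 := hs.2 (M - 1 - k) (by omega)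
    calc x (m₀ + 1 - M + k) = x (m₀ - (M - 1 - k)) := by congr 1; omega
      _ = x (n - 1 - (M - 1 - k)) := h1
      _ = x (n - M + k) := by congr 1; omega
  have hlmu : l = mu x (n - 1) m₀ := le_antisymm hl_le hmu_le
  refine ⟨m₀, hm₀P, by rw [hxn, hm₀1], ?_⟩
  intro m' hm'
  by_cases hc : mu x (n - 1) m' < mu x (n - 1) m₀
  · exact Or.inl hc
  · right
    push_neg at hc
    have hs' : Sim x (n - 1) m' l :=
      sim_mono (sim_mu x (n - 1) m') (by omega)
    have hm'2 := (hPocc m' hm').1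
    have hlm' : l ≤ m' + 1 := by have := hs'.1; omega
    have hmatch' : MatchAt x n l (m' + 1 - l) := by
      refine ⟨hl0, hln, by omega, fun k hk => ?_⟩
      have h1 := hs'.2 (l - 1 - k) (by omega)
      calc x (m' + 1 - l + k) = x (m' - (l - 1 - k)) := by congr 1; omega
        _ = x (n - 1 - (l - 1 - k)) := h1
        _ = x (n - l + k) := by congr 1; omega
    have := hjmax _ hmatch'
    omega

lemma ustep (x : ℕ → Bool) (hx : IsEM x) (B : List Bool) (K p : ℕ)
    (hK : B.length = K + 1) (hp : 0 < p) (hn : 3 ≤ p + K + 1)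
    (hop : OccursAt x B p)
    (Q : ℕ → Prop) (hne : ∃ q, Q q)
    (hQocc : ∀ q, Q q → q < p ∧ OccursAt x B q)
    (hQall : ∀ q, q < p → OccursAt x B q → Q q) :
    ∃ q, Q q ∧ x (p + K + 1) = !x (q + K + 1) ∧
      ∀ q', Q q' → mu x (p + K) (q' + K) < mu x (p + K) (q + K) ∨ q' ≤ q := by
  obtain ⟨m, hPm, hbit, hprop⟩ := rule x hx B (p + K + 1) hn (by omega) (by omega)
      (by have h : p + K + 1 - B.length = p := by omega
          rw [h]; exact hop)
      (fun m => ∃ q, Q q ∧ m = q + K)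
      (by obtain ⟨q, hq⟩ := hne; exact ⟨q + K, q, hq, rfl⟩)
      (by rintro m ⟨q, hq, rfl⟩
          obtain ⟨hqp, hocq⟩ := hQocc q hq
          refine ⟨by omega, by omega, ?_⟩
          have h : q + K + 1 - B.length = q := by omega
          rw [h]; exact hocq)
      (by intro m h2 h1 hoc
          refine ⟨m - K, ?_, by omega⟩
          have hq : m + 1 - B.length = m - K := by omega
          rw [hq] at hoc
          exact hQall (m - K) (by omega) hoc)
  simp only [Nat.add_sub_cancel] at hprop
  obtain ⟨q, hq, rfl⟩ := hPm
  refine ⟨q, hq, hbit, ?_⟩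
  intro q' hq'
  rcases hprop (q' + K) ⟨q', hq', rfl⟩ with h | h
  · exact Or.inl h
  · exact Or.inr (by omega)

lemma vstep (x : ℕ → Bool) (hx : IsEM x) (B : List Bool) (K p : ℕ) (c : Bool)
    (hK : B.length = K + 1) (hp : 0 < p)
    (hop : OccursAt x B p) (hcp : x (p + K + 1) = c)
    (Q : ℕ → Prop) (hne : ∃ q, Q q)
    (hQocc : ∀ q, Q q → q < p ∧ OccursAt x B q ∧ x (q + K + 1) = c)
    (hQall : ∀ q, q < p → OccursAt x B q → x (q + K + 1) = c → Q q) :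
    ∃ q, Q q ∧ x (p + K + 1 + 1) = !x (q + K + 1 + 1) ∧
      ∀ q', Q q' →
        mu x (p + K + 1) (q' + K + 1) < mu x (p + K + 1) (q + K + 1) ∨ q' ≤ q := by
  have hwlen : (B ++ [c]).length = K + 2 := by simp [hK]
  obtain ⟨m, hPm, hbit, hprop⟩ := rule x hx (B ++ [c]) (p + K + 1 + 1) (by omega)
      (by omega) (by omega)
      (by have h : p + K + 1 + 1 - (B ++ [c]).length = p := by omega
          rw [h, occursAt_append]
          refine ⟨hop, ?_⟩
          rw [show p + B.length = p + K + 1 by omega]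
          exact hcp)
      (fun m => ∃ q, Q q ∧ m = q + K + 1)
      (by obtain ⟨q, hq⟩ := hne; exact ⟨q + K + 1, q, hq, rfl⟩)
      (by rintro m ⟨q, hq, rfl⟩
          obtain ⟨hqp, hocq, hbq⟩ := hQocc q hq
          refine ⟨by omega, by omega, ?_⟩
          have h : q + K + 1 + 1 - (B ++ [c]).length = q := by omega
          rw [h, occursAt_append]
          refine ⟨hocq, ?_⟩
          rw [show q + B.length = q + K + 1 by omega]
          exact hbq)
      (by intro m h2 h1 hoc
          have hq : m + 1 - (B ++ [c]).length = m - K - 1 := by omega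
          rw [hq, occursAt_append] at hoc
          refine ⟨m - K - 1, ?_, by omega⟩
          refine hQall (m - K - 1) (by omega) hoc.1 ?_
          have := hoc.2
          rwa [show m - K - 1 + B.length = m - K - 1 + K + 1 by omega] at this
          )
  simp only [Nat.add_sub_cancel] at hprop
  obtain ⟨q, hq, rfl⟩ := hPm
  refine ⟨q, hq, hbit, ?_⟩
  intro q' hq'
  rcases hprop (q' + K + 1) ⟨q', hq', rfl⟩ with h | h
  · exact Or.inl h
  · exact Or.inr (by omega)

end EMaux

/-- Proposition 4.1: let `B` be a good word whose first five occurrences start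
at `p₁ < ⋯ < p₅` (so they end at positions `a < b < c < d < e` with
`a = p₁ + |B| - 1`, etc.).  Let `u` be the 5-bit word of bits immediately
following these occurrences and `v` the word of bits two places after.  Then
`|N_u(0) - N_u(1)| ≤ 1` or `|N_v(0) - N_v(1)| ≤ 1`. -/
theorem em_proposition_4_1
    (x : ℕ → Bool) (hx : IsEM x) (B : List Bool) (hB : B ≠ [])
    (hgood : GoodWord x B) (p₁ p₂ p₃ p₄ p₅ : ℕ)
    (h5 : FirstFiveOccs x B p₁ p₂ p₃ p₄ p₅)
    (u v : List Bool)
    (hu : u = [x (p₁ + B.length), x (p₂ + B.length), x (p₃ + B.length),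
               x (p₄ + B.length), x (p₅ + B.length)])
    (hv : v = [x (p₁ + B.length + 1), x (p₂ + B.length + 1),
               x (p₃ + B.length + 1), x (p₄ + B.length + 1),
               x (p₅ + B.length + 1)]) :
    ((u.count false : ℤ) - (u.count true : ℤ)).natAbs ≤ 1 ∨
    ((v.count false : ℤ) - (v.count true : ℤ)).natAbs ≤ 1 := by
  classical
  have bool_ne : ∀ b : Bool, ¬ (b = !b) := by decide
  obtain ⟨h12, h23, h34, h45, ho1, ho2, ho3, ho4, ho5, hmax⟩ := h5
  obtain ⟨K, hK⟩ : ∃ K, B.length = K + 1 := by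
    cases hB' : B.length with
    | zero => exact absurd (List.length_eq_zero_iff.mp hB') hB
    | succ k => exact ⟨k, rfl⟩
  simp only [hK, ← Nat.add_assoc] at hu hv
  -- identify the good-word witnesses with p₁, p₂
  obtain ⟨i0, j0, hij, hoi, hoj, huniq, hgd⟩ := hgood
  have hleast : ∀ q, OccursAt x B q → p₁ ≤ q := by
    intro q hq
    by_contra hlt
    push_neg at hlt
    rcases hmax q (by omega) hq with h | h | h | h <;> omega
  have hj2 : j0 ≤ p₂ := by
    by_contra h
    push_neg at h
    have h1 := huniq p₁ (by omega) ho1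
    have h2 := huniq p₂ (by omega) ho2
    omega
  have hi0 : i0 = p₁ := by
    have hip := hleast i0 hoi
    rcases hmax i0 (by omega) hoi with h | h | h | h <;> omega
  have hj0 : j0 = p₂ := by
    have hip := hleast i0 hoi
    rcases hmax j0 (by omega) hoj with h | h | h | h <;> omega
  rw [hi0, hj0] at hgd
  -- basic mu facts
  have hmuge : ∀ q r : ℕ, OccursAt x B q → OccursAt x B r →
      K + 1 ≤ EMaux.mu x (r + K) (q + K) := by
    intro q r hq hr
    apply EMaux.le_mu
    refine ⟨by omega, fun k hk => ?_⟩
    have e1 := hq ⟨K - k, by omega⟩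
    have e2 := hr ⟨K - k, by omega⟩
    calc x (q + K - k) = x (q + (K - k)) := by congr 1; omega
      _ = B.get ⟨K - k, by omega⟩ := e1
      _ = x (r + (K - k)) := e2.symm
      _ = x (r + K - k) := by congr 1; omega
  have hmu12 : EMaux.mu x (p₂ + K) (p₁ + K) = K + 1 := by
    refine le_antisymm ?_ (hmuge p₁ p₂ ho1 ho2)
    by_contra hc
    push_neg at hc
    have hs : EMaux.Sim x (p₂ + K) (p₁ + K) (K + 2) :=
      EMaux.sim_mono (EMaux.sim_mu x (p₂ + K) (p₁ + K)) (by omega)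
    have hp1 : 1 ≤ p₁ := by have := hs.1; omega
    have hb2 := hs.2 (K + 1) (by omega)
    rw [show p₁ + K - (K + 1) = p₁ - 1 by omega,
        show p₂ + K - (K + 1) = p₂ - 1 by omega] at hb2
    rcases hgd with h | h
    · omega
    · rw [h] at hb2
      exact bool_ne _ hb2.symm
  have hn2 : 3 ≤ p₂ + K + 1 := by
    by_contra h
    push_neg at h
    have hp2 : p₂ = 1 := by omega
    have hK0 : K = 0 := by omega
    have hp1 : p₁ = 0 := by omega
    have e1 : x p₁ = B.get ⟨0, by omega⟩ := by simpa using ho1 ⟨0, by omega⟩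
    have e2 : x p₂ = B.get ⟨0, by omega⟩ := by simpa using ho2 ⟨0, by omega⟩
    have e3 : x p₁ = x p₂ := e1.trans e2.symm
    rw [hp1, hp2, hx.1, hx.2.1] at e3
    exact absurd e3 (by decide)
  -- the second-occurrence bit is the complement of the first
  have hu21 : x (p₂ + K + 1) = !x (p₁ + K + 1) := by
    obtain ⟨q, hq, hbit, -⟩ := EMaux.ustep x hx B K p₂ hK (by omega) hn2 ho2
        (fun q => q = p₁) ⟨p₁, rfl⟩
        (by rintro q rfl; exact ⟨h12, ho1⟩)
        (by intro q hq hocq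
            rcases hmax q (by omega) hocq with h | h | h | h <;> omega)
    rw [hq] at hbit
    exact hbit
  by_cases hcase : x (p₃ + K + 1) = x (p₄ + K + 1) ∧ x (p₄ + K + 1) = x (p₅ + K + 1)
  case neg =>
    left
    revert hcase
    rw [hu, hu21]
    generalize x (p₁ + K + 1) = a
    generalize x (p₃ + K + 1) = c
    generalize x (p₄ + K + 1) = d
    generalize x (p₅ + K + 1) = e
    cases a <;> cases c <;> cases d <;> cases e <;> decide
  case pos =>
  obtain ⟨hc34, hc45⟩ := hcase
  right
  by_cases hI : x (p₃ + K + 1) = x (p₁ + K + 1)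
  case pos =>
    -- CASE II : u₃ = u₄ = u₅ = u₁
    have h4e : x (p₄ + K + 1) = x (p₁ + K + 1) := hc34.symm.trans hI
    have h5e : x (p₅ + K + 1) = x (p₁ + K + 1) := hc45.symm.trans h4e
    -- u-step at p₄
    obtain ⟨q, hq, hbit4, hpr4⟩ := EMaux.ustep x hx B K p₄ hK (by omega) (by omega) ho4
        (fun q => q = p₁ ∨ q = p₂ ∨ q = p₃) ⟨p₁, Or.inl rfl⟩
        (by rintro q (rfl | rfl | rfl)
            exacts [⟨by omega, ho1⟩, ⟨by omega, ho2⟩, ⟨by omega, ho3⟩])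
        (by intro q hq hocq
            rcases hmax q (by omega) hocq with h | h | h | h
            exacts [Or.inl h, Or.inr (Or.inl h), Or.inr (Or.inr h), by omega])
    have T43 : EMaux.mu x (p₄ + K) (p₃ + K) < EMaux.mu x (p₄ + K) (p₂ + K) := by
      rcases hq with hq | hq | hq
      · rw [hq] at hbit4
        exact absurd (h4e.symm.trans hbit4) (bool_ne _)
      · have h := hpr4 p₃ (Or.inr (Or.inr rfl))
        rw [hq] at h
        rcases h with h | h
        · exact h
        · omega
      · rw [hq, hI] at hbit4
        exact absurd (h4e.symm.trans hbit4) (bool_ne _)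
    -- u-step at p₅
    obtain ⟨q, hq, hbit5, hpr5⟩ := EMaux.ustep x hx B K p₅ hK (by omega) (by omega) ho5
        (fun q => q = p₁ ∨ q = p₂ ∨ q = p₃ ∨ q = p₄) ⟨p₁, Or.inl rfl⟩
        (by rintro q (rfl | rfl | rfl | rfl)
            exacts [⟨by omega, ho1⟩, ⟨by omega, ho2⟩, ⟨by omega, ho3⟩, ⟨by omega, ho4⟩])
        (by intro q hq hocq
            rcases hmax q (by omega) hocq with h | h | h | h
            exacts [Or.inl h, Or.inr (Or.inl h), Or.inr (Or.inr (Or.inl h)),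
              Or.inr (Or.inr (Or.inr h))])
    have T5 : EMaux.mu x (p₅ + K) (p₃ + K) < EMaux.mu x (p₅ + K) (p₂ + K) ∧
        EMaux.mu x (p₅ + K) (p₄ + K) < EMaux.mu x (p₅ + K) (p₂ + K) := by
      rcases hq with hq | hq | hq | hq
      · rw [hq] at hbit5
        exact absurd (h5e.symm.trans hbit5) (bool_ne _)
      · constructor
        · have h := hpr5 p₃ (Or.inr (Or.inr (Or.inl rfl)))
          rw [hq] at h
          rcases h with h | h
          · exact h
          · omega
        · have h := hpr5 p₄ (Or.inr (Or.inr (Or.inr rfl)))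
          rw [hq] at h
          rcases h with h | h
          · exact h
          · omega
      · rw [hq, hI] at hbit5
        exact absurd (h5e.symm.trans hbit5) (bool_ne _)
      · rw [hq, h4e] at hbit5
        exact absurd (h5e.symm.trans hbit5) (bool_ne _)
    obtain ⟨T53, T54⟩ := T5
    -- mu computations
    have F43 : EMaux.mu x (p₃ + K) (p₂ + K) = EMaux.mu x (p₄ + K) (p₃ + K) :=
      EMaux.mu_eq_of_lt_right (by omega) T43
    have hge23 := hmuge p₂ p₃ ho2 ho3
    have hge34 := hmuge p₃ p₄ ho3 ho4
    have F41 : EMaux.mu x (p₄ + K) (p₁ + K) = K + 1 := by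
      have := EMaux.mu_eq_of_lt_left (x := x) (s := p₄ + K) (t₁ := p₁ + K)
        (t₂ := p₂ + K) (by omega) (by rw [hmu12]; omega)
      rw [hmu12] at this
      exact this
    have F53 : EMaux.mu x (p₃ + K) (p₂ + K) = EMaux.mu x (p₅ + K) (p₃ + K) :=
      EMaux.mu_eq_of_lt_right (by omega) T53
    have F54 : EMaux.mu x (p₄ + K) (p₂ + K) = EMaux.mu x (p₅ + K) (p₄ + K) :=
      EMaux.mu_eq_of_lt_right (by omega) T54
    have F51 : EMaux.mu x (p₅ + K) (p₁ + K) = K + 1 := by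
      have := EMaux.mu_eq_of_lt_left (x := x) (s := p₅ + K) (t₁ := p₁ + K)
        (t₂ := p₂ + K) (by omega) (by rw [hmu12]; omega)
      rw [hmu12] at this
      exact this
    -- v-step at p₃
    obtain ⟨q, hq, V3, -⟩ := EMaux.vstep x hx B K p₃ (x (p₃ + K + 1)) hK (by omega)
        ho3 rfl (fun q => q = p₁) ⟨p₁, rfl⟩
        (by rintro q rfl; exact ⟨by omega, ho1, hI.symm⟩)
        (by intro q hq hocq hbq
            rcases hmax q (by omega) hocq with h | h | h | h
            · exact h
            · exfalso
              rw [h, hu21, hI] at hbq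
              exact bool_ne _ hbq.symm
            · omega
            · omega)
    rw [hq] at V3
    -- v-step at p₄
    obtain ⟨q, hq, V4, hpr4'⟩ := EMaux.vstep x hx B K p₄ (x (p₄ + K + 1)) hK (by omega)
        ho4 rfl (fun q => q = p₁ ∨ q = p₃) ⟨p₁, Or.inl rfl⟩
        (by rintro q (rfl | rfl)
            exacts [⟨by omega, ho1, h4e.symm⟩, ⟨by omega, ho3, hc34⟩])
        (by intro q hq hocq hbq
            rcases hmax q (by omega) hocq with h | h | h | h
            · exact Or.inl h
            · exfalso
              rw [h, hu21, h4e] at hbq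
              exact bool_ne _ hbq.symm
            · exact Or.inr h
            · omega)
    have hq3 : q = p₃ := by
      rcases hq with hq | hq
      · exfalso
        have h := hpr4' p₃ (Or.inr rfl)
        rw [hq] at h
        rcases h with h | h
        · rw [EMaux.mu_succ hc34, EMaux.mu_succ h4e.symm, F41, ← F43] at h
          omega
        · omega
      · exact hq
    rw [hq3] at V4
    -- v-step at p₅
    obtain ⟨q, hq, V5, hpr5'⟩ := EMaux.vstep x hx B K p₅ (x (p₅ + K + 1)) hK (by omega)
        ho5 rfl (fun q => q = p₁ ∨ q = p₃ ∨ q = p₄) ⟨p₁, Or.inl rfl⟩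
        (by rintro q (rfl | rfl | rfl)
            exacts [⟨by omega, ho1, h5e.symm⟩, ⟨by omega, ho3, hc34.trans hc45⟩,
              ⟨by omega, ho4, hc45⟩])
        (by intro q hq hocq hbq
            rcases hmax q (by omega) hocq with h | h | h | h
            · exact Or.inl h
            · exfalso
              rw [h, hu21, h5e] at hbq
              exact bool_ne _ hbq.symm
            · exact Or.inr (Or.inl h)
            · exact Or.inr (Or.inr h))
    have hq4 : q = p₄ := by
      rcases hq with hq | hq | hq
      · exfalso
        have h := hpr5' p₄ (Or.inr (Or.inr rfl))
        rw [hq] at h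
        rcases h with h | h
        · rw [EMaux.mu_succ hc45, EMaux.mu_succ h5e.symm, F51, ← F54] at h
          omega
        · omega
      · exfalso
        have h := hpr5' p₄ (Or.inr (Or.inr rfl))
        rw [hq] at h
        rcases h with h | h
        · rw [EMaux.mu_succ hc45, EMaux.mu_succ (hc34.trans hc45),
              ← F54, ← F53] at h
          omega
        · omega
      · exact hq
    rw [hq4] at V5
    rw [hv, V5, V4, V3]
    generalize x (p₁ + K + 1 + 1) = a
    generalize x (p₂ + K + 1 + 1) = b
    cases a <;> cases b <;> decide
  case neg =>
    -- CASE I : u₃ = u₄ = u₅ = u₂ = !u₁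
    have h32 : x (p₃ + K + 1) = x (p₂ + K + 1) := by
      rw [hu21]
      rcases Bool.eq_false_or_eq_true (x (p₃ + K + 1)) with h3 | h3 <;>
        rcases Bool.eq_false_or_eq_true (x (p₁ + K + 1)) with h1 | h1 <;>
        rw [h3, h1] <;>
        first
          | rfl
          | exact absurd (h3.trans h1.symm) hI
    have h42 : x (p₄ + K + 1) = x (p₂ + K + 1) := hc34.symm.trans h32
    have h52 : x (p₅ + K + 1) = x (p₂ + K + 1) := hc45.symm.trans h42
    -- u-step at p₃
    obtain ⟨q, hq, hbit3, hpr3⟩ := EMaux.ustep x hx B K p₃ hK (by omega) (by omega) ho3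
        (fun q => q = p₁ ∨ q = p₂) ⟨p₁, Or.inl rfl⟩
        (by rintro q (rfl | rfl)
            exacts [⟨by omega, ho1⟩, ⟨by omega, ho2⟩])
        (by intro q hq hocq
            rcases hmax q (by omega) hocq with h | h | h | h
            exacts [Or.inl h, Or.inr h, by omega, by omega])
    have S32 : EMaux.mu x (p₃ + K) (p₂ + K) < EMaux.mu x (p₃ + K) (p₁ + K) := by
      rcases hq with hq | hq
      · have h := hpr3 p₂ (Or.inr rfl)
        rw [hq] at h
        rcases h with h | h
        · exact h
        · omega
      · rw [hq] at hbit3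
        exact absurd (h32.symm.trans hbit3) (bool_ne _)
    -- u-step at p₄
    obtain ⟨q, hq, hbit4, hpr4⟩ := EMaux.ustep x hx B K p₄ hK (by omega) (by omega) ho4
        (fun q => q = p₁ ∨ q = p₂ ∨ q = p₃) ⟨p₁, Or.inl rfl⟩
        (by rintro q (rfl | rfl | rfl)
            exacts [⟨by omega, ho1⟩, ⟨by omega, ho2⟩, ⟨by omega, ho3⟩])
        (by intro q hq hocq
            rcases hmax q (by omega) hocq with h | h | h | h
            exacts [Or.inl h, Or.inr (Or.inl h), Or.inr (Or.inr h), by omega])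
    have S4 : EMaux.mu x (p₄ + K) (p₂ + K) < EMaux.mu x (p₄ + K) (p₁ + K) ∧
        EMaux.mu x (p₄ + K) (p₃ + K) < EMaux.mu x (p₄ + K) (p₁ + K) := by
      rcases hq with hq | hq | hq
      · constructor
        · have h := hpr4 p₂ (Or.inr (Or.inl rfl))
          rw [hq] at h
          rcases h with h | h
          · exact h
          · omega
        · have h := hpr4 p₃ (Or.inr (Or.inr rfl))
          rw [hq] at h
          rcases h with h | h
          · exact h
          · omega
      · rw [hq] at hbit4
        exact absurd (h42.symm.trans hbit4) (bool_ne _)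
      · rw [hq, h32] at hbit4
        exact absurd (h42.symm.trans hbit4) (bool_ne _)
    obtain ⟨S42, S43⟩ := S4
    -- u-step at p₅
    obtain ⟨q, hq, hbit5, hpr5⟩ := EMaux.ustep x hx B K p₅ hK (by omega) (by omega) ho5
        (fun q => q = p₁ ∨ q = p₂ ∨ q = p₃ ∨ q = p₄) ⟨p₁, Or.inl rfl⟩
        (by rintro q (rfl | rfl | rfl | rfl)
            exacts [⟨by omega, ho1⟩, ⟨by omega, ho2⟩, ⟨by omega, ho3⟩, ⟨by omega, ho4⟩])
        (by intro q hq hocq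
            rcases hmax q (by omega) hocq with h | h | h | h
            exacts [Or.inl h, Or.inr (Or.inl h), Or.inr (Or.inr (Or.inl h)),
              Or.inr (Or.inr (Or.inr h))])
    have S5 : EMaux.mu x (p₅ + K) (p₂ + K) < EMaux.mu x (p₅ + K) (p₁ + K) ∧
        EMaux.mu x (p₅ + K) (p₃ + K) < EMaux.mu x (p₅ + K) (p₁ + K) ∧
        EMaux.mu x (p₅ + K) (p₄ + K) < EMaux.mu x (p₅ + K) (p₁ + K) := by
      rcases hq with hq | hq | hq | hq
      · refine ⟨?_, ?_, ?_⟩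
        · have h := hpr5 p₂ (Or.inr (Or.inl rfl))
          rw [hq] at h
          rcases h with h | h
          · exact h
          · omega
        · have h := hpr5 p₃ (Or.inr (Or.inr (Or.inl rfl)))
          rw [hq] at h
          rcases h with h | h
          · exact h
          · omega
        · have h := hpr5 p₄ (Or.inr (Or.inr (Or.inr rfl)))
          rw [hq] at h
          rcases h with h | h
          · exact h
          · omega
      · rw [hq] at hbit5
        exact absurd (h52.symm.trans hbit5) (bool_ne _)
      · rw [hq, h32] at hbit5
        exact absurd (h52.symm.trans hbit5) (bool_ne _)
      · rw [hq, h42] at hbit5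
        exact absurd (h52.symm.trans hbit5) (bool_ne _)
    obtain ⟨S52, S53, S54⟩ := S5
    -- mu computations
    have hge23 := hmuge p₂ p₃ ho2 ho3
    have hge34 := hmuge p₃ p₄ ho3 ho4
    have E32 : EMaux.mu x (p₂ + K) (p₁ + K) = EMaux.mu x (p₃ + K) (p₂ + K) :=
      EMaux.mu_eq_of_lt_right (by omega) S32
    have E42 : EMaux.mu x (p₂ + K) (p₁ + K) = EMaux.mu x (p₄ + K) (p₂ + K) :=
      EMaux.mu_eq_of_lt_right (by omega) S42
    have E43 : EMaux.mu x (p₃ + K) (p₁ + K) = EMaux.mu x (p₄ + K) (p₃ + K) :=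
      EMaux.mu_eq_of_lt_right (by omega) S43
    have E52 : EMaux.mu x (p₂ + K) (p₁ + K) = EMaux.mu x (p₅ + K) (p₂ + K) :=
      EMaux.mu_eq_of_lt_right (by omega) S52
    have E53 : EMaux.mu x (p₃ + K) (p₁ + K) = EMaux.mu x (p₅ + K) (p₃ + K) :=
      EMaux.mu_eq_of_lt_right (by omega) S53
    have E54 : EMaux.mu x (p₄ + K) (p₁ + K) = EMaux.mu x (p₅ + K) (p₄ + K) :=
      EMaux.mu_eq_of_lt_right (by omega) S54
    have G31 : K + 1 < EMaux.mu x (p₃ + K) (p₁ + K) := by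
      rw [hmu12] at E32; omega
    have G41 : EMaux.mu x (p₃ + K) (p₁ + K) < EMaux.mu x (p₄ + K) (p₁ + K) := by
      rw [E43]; exact S43
    -- v-step at p₃
    obtain ⟨q, hq, V3, -⟩ := EMaux.vstep x hx B K p₃ (x (p₃ + K + 1)) hK (by omega)
        ho3 rfl (fun q => q = p₂) ⟨p₂, rfl⟩
        (by rintro q rfl; exact ⟨by omega, ho2, h32.symm⟩)
        (by intro q hq hocq hbq
            rcases hmax q (by omega) hocq with h | h | h | h
            · exfalso
              rw [h] at hbq
              rw [h32, hu21] at hbq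
              exact bool_ne _ hbq
            · exact h
            · omega
            · omega)
    rw [hq] at V3
    -- v-step at p₄
    obtain ⟨q, hq, V4, hpr4'⟩ := EMaux.vstep x hx B K p₄ (x (p₄ + K + 1)) hK (by omega)
        ho4 rfl (fun q => q = p₂ ∨ q = p₃) ⟨p₂, Or.inl rfl⟩
        (by rintro q (rfl | rfl)
            exacts [⟨by omega, ho2, h42.symm⟩, ⟨by omega, ho3, hc34⟩])
        (by intro q hq hocq hbq
            rcases hmax q (by omega) hocq with h | h | h | h
            · exfalso
              rw [h] at hbq
              rw [h42, hu21] at hbq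
              exact bool_ne _ hbq
            · exact Or.inl h
            · exact Or.inr h
            · omega)
    have hq3 : q = p₃ := by
      rcases hq with hq | hq
      · exfalso
        have h := hpr4' p₃ (Or.inr rfl)
        rw [hq] at h
        rcases h with h | h
        · rw [EMaux.mu_succ hc34, EMaux.mu_succ h42.symm, ← E43, ← E42, hmu12] at h
          omega
        · omega
      · exact hq
    rw [hq3] at V4
    -- v-step at p₅
    obtain ⟨q, hq, V5, hpr5'⟩ := EMaux.vstep x hx B K p₅ (x (p₅ + K + 1)) hK (by omega)
        ho5 rfl (fun q => q = p₂ ∨ q = p₃ ∨ q = p₄) ⟨p₂, Or.inl rfl⟩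
        (by rintro q (rfl | rfl | rfl)
            exacts [⟨by omega, ho2, h52.symm⟩, ⟨by omega, ho3, hc34.trans hc45⟩,
              ⟨by omega, ho4, hc45⟩])
        (by intro q hq hocq hbq
            rcases hmax q (by omega) hocq with h | h | h | h
            · exfalso
              rw [h] at hbq
              rw [h52, hu21] at hbq
              exact bool_ne _ hbq
            · exact Or.inl h
            · exact Or.inr (Or.inl h)
            · exact Or.inr (Or.inr h))
    have hq4 : q = p₄ := by
      rcases hq with hq | hq | hq
      · exfalso
        have h := hpr5' p₄ (Or.inr (Or.inr rfl))
        rw [hq] at h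
        rcases h with h | h
        · rw [EMaux.mu_succ hc45, EMaux.mu_succ h52.symm, ← E54, ← E52, hmu12] at h
          omega
        · omega
      · exfalso
        have h := hpr5' p₄ (Or.inr (Or.inr rfl))
        rw [hq] at h
        rcases h with h | h
        · rw [EMaux.mu_succ hc45, EMaux.mu_succ (hc34.trans hc45), ← E54, ← E53] at h
          omega
        · omega
      · exact hq
    rw [hq4] at V5
    rw [hv, V5, V4, V3]
    generalize x (p₁ + K + 1 + 1) = a
    generalize x (p₂ + K + 1 + 1) = b
    cases a <;> cases b <;> decide
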